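/- Let m, n, d, k be positive integers, let g be an m×n real matrix, and define the m×(n·k) real matrix g' by g'_{x,(y,i)} = g_{x,y} for all x ∈ Fin m, y ∈ Fin n, i ∈ Fin k (each column of g repeated k times). Then max_{p ∈ C(m,n,d)} \sum_{x,y} g_{x,y} p_{x,y} = max_{p' ∈ C(m,n·k,d)} \sum_{x,y'} g'_{x,y'} p'_{x,y'} (both maxima exist, as each set is the convex hull of a finite set and hence compact). -/

import Mathlib

/-- `V m n d` : the set of `m × n` real matrices with all entries in `{0,1}`,
each row summing to `1`, and with at most `d` nonzero columns. -/
def V (m n d : ℕ) : Set (Matrix (Fin m) (Fin n) ℝ) :=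
  {p | (∀ x y, p x y = 0 ∨ p x y = 1) ∧ (∀ x, ∑ y, p x y = 1) ∧
       ({y : Fin n | ∃ x, p x y ≠ 0}).ncard ≤ d}

/-- `C m n d` : the convex hull of `V m n d`. -/
def C (m n d : ℕ) : Set (Matrix (Fin m) (Fin n) ℝ) := convexHull ℝ (V m n d)

/-- The payoff functional as a linear map. -/
def payoff {m n : ℕ} (g : Matrix (Fin m) (Fin n) ℝ) :
    Matrix (Fin m) (Fin n) ℝ →ₗ[ℝ] ℝ where
  toFun p := ∑ x, ∑ y, g x y * p x y
  map_add' p q := by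
    simp [Matrix.add_apply, mul_add, Finset.sum_add_distrib]
  map_smul' c p := by
    simp [Matrix.smul_apply, Finset.mul_sum, smul_eq_mul]
    congr 1; ext x; congr 1; ext y; ring

lemma V_finite (m n d : ℕ) : (V m n d).Finite := by
  have : V m n d ⊆ Set.range (fun (q : Fin m → Fin n → Bool) =>
      (Matrix.of fun x y => if q x y then (1 : ℝ) else 0)) := by
    intro p hp
    refine ⟨fun x y => decide (p x y = 1), ?_⟩
    ext x y
    rcases hp.1 x y with h | h <;> simp [Matrix.of_apply, h]
  exact (Set.finite_range _).subset this

lemma V_nonempty (m n d : ℕ) (hn : 0 < n) (hd : 0 < d) : (V m n d).Nonempty := by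
  refine ⟨Matrix.of fun x y => if y = ⟨0, hn⟩ then 1 else 0, ?_, ?_, ?_⟩
  · intro x y; by_cases h : y = ⟨0, hn⟩ <;> simp [h]
  · intro x; simp
  · have : {y : Fin n | ∃ x : Fin m, (Matrix.of fun x (y : Fin n) =>
        if y = ⟨0, hn⟩ then (1:ℝ) else 0) x y ≠ 0} ⊆ {(⟨0, hn⟩ : Fin n)} := by
      intro y ⟨x, hx⟩
      have : y = ⟨0, hn⟩ := by
        by_contra h
        simp [Matrix.of_apply, h] at hx
      simp [this]
    calc _ ≤ ({(⟨0, hn⟩ : Fin n)} : Set (Fin n)).ncard :=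
          Set.ncard_le_ncard this (Set.finite_singleton _)
      _ ≤ d := by simpa using Nat.succ_le_of_lt hd

lemma greatest_hull {m n d : ℕ} (hn : 0 < n) (hd : 0 < d)
    (g : Matrix (Fin m) (Fin n) ℝ) :
    ∃ M, IsGreatest (payoff g '' V m n d) M ∧ IsGreatest (payoff g '' C m n d) M := by
  have hfin : (payoff g '' V m n d).Finite := (V_finite m n d).image _
  have hne : (payoff g '' V m n d).Nonempty := (V_nonempty m n d hn hd).image _
  refine ⟨sSup _, ⟨hne.csSup_mem hfin, fun a ha => le_csSup hfin.bddAbove ha⟩, ?_, ?_⟩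
  · exact Set.image_mono (subset_convexHull ℝ _) (hne.csSup_mem hfin)
  · rintro a ⟨p, hp, rfl⟩
    have hsub : C m n d ⊆ payoff g ⁻¹' Set.Iic (sSup (payoff g '' V m n d)) := by
      apply convexHull_min
      · intro q hq
        exact le_csSup hfin.bddAbove ⟨q, hq, rfl⟩
      · exact (convex_Iic _).linear_preimage _
    exact hsub hp

section Main

variable {m n d k : ℕ}

/-- payoff value of `V m n d` is attained on `V m (n*k) d`. -/
lemma forward (hk : 0 < k) (g : Matrix (Fin m) (Fin n) ℝ)
    (g' : Matrix (Fin m) (Fin (n * k)) ℝ)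
    (hg' : ∀ (x : Fin m) (y : Fin n) (i : Fin k),
      g' x (finProdFinEquiv (y, i)) = g x y)
    {p : Matrix (Fin m) (Fin n) ℝ} (hp : p ∈ V m n d) :
    ∃ p' ∈ V m (n * k) d, payoff g' p' = payoff g p := by
  set e := finProdFinEquiv (m := n) (n := k)
  set i0 : Fin k := ⟨0, hk⟩
  set p' : Matrix (Fin m) (Fin (n * k)) ℝ :=
    Matrix.of fun x y' => if (e.symm y').2 = i0 then p x (e.symm y').1 else 0 with hp'def
  have key : ∀ x y i, p' x (e (y, i)) = if i = i0 then p x y else 0 := by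
    intro x y i; simp [hp'def]
  refine ⟨p', ⟨?_, ?_, ?_⟩, ?_⟩
  · intro x y'
    by_cases h : (e.symm y').2 = i0
    · simpa [hp'def, h] using hp.1 x (e.symm y').1
    · simp [hp'def, h]
  · intro x
    rw [← e.sum_comp (fun y' => p' x y')]
    rw [Fintype.sum_prod_type]
    simp only [key]
    simpa using hp.2.1 x
  · have hsub : {y' : Fin (n * k) | ∃ x, p' x y' ≠ 0} ⊆
        (fun y => e (y, i0)) '' {y : Fin n | ∃ x, p x y ≠ 0} := by
      rintro y' ⟨x, hx⟩
      by_cases h : (e.symm y').2 = i0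
      · refine ⟨(e.symm y').1, ⟨x, ?_⟩, ?_⟩
        · simpa [hp'def, h] using hx
        · simp only [← h]
          rw [← Prod.mk.eta (p := e.symm y'), Equiv.apply_symm_apply]
      · exact absurd (by simp [hp'def, h]) hx
    calc ({y' : Fin (n * k) | ∃ x, p' x y' ≠ 0}).ncard
        ≤ ((fun y => e (y, i0)) '' {y : Fin n | ∃ x, p x y ≠ 0}).ncard :=
          Set.ncard_le_ncard hsub (Set.toFinite _)
      _ ≤ ({y : Fin n | ∃ x, p x y ≠ 0}).ncard := Set.ncard_image_le (Set.toFinite _)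
      _ ≤ d := hp.2.2
  · simp only [payoff, LinearMap.coe_mk, AddHom.coe_mk]
    congr 1; ext x
    rw [← e.sum_comp (fun y' => g' x y' * p' x y'), Fintype.sum_prod_type]
    simp only [key, hg']
    simp

/-- payoff value of `V m (n*k) d` is attained on `V m n d`. -/
lemma backward (hk : 0 < k) (g : Matrix (Fin m) (Fin n) ℝ)
    (g' : Matrix (Fin m) (Fin (n * k)) ℝ)
    (hg' : ∀ (x : Fin m) (y : Fin n) (i : Fin k),
      g' x (finProdFinEquiv (y, i)) = g x y)
    {p' : Matrix (Fin m) (Fin (n * k)) ℝ} (hp' : p' ∈ V m (n * k) d) :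
    ∃ p ∈ V m n d, payoff g p = payoff g' p' := by
  set e := finProdFinEquiv (m := n) (n := k)
  set p : Matrix (Fin m) (Fin n) ℝ :=
    Matrix.of fun x y => ∑ i, p' x (e (y, i)) with hpdef
  have hnn : ∀ x y', 0 ≤ p' x y' := by
    intro x y'; rcases hp'.1 x y' with h | h <;> simp [h]
  have hpnn : ∀ x y, 0 ≤ p x y := by
    intro x y
    simp only [hpdef, Matrix.of_apply]
    exact Finset.sum_nonneg fun i _ => hnn x _
  have hrow : ∀ x, ∑ y, p x y = 1 := by
    intro x
    rw [← hp'.2.1 x, ← e.sum_comp (fun y' => p' x y'), Fintype.sum_prod_type]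
    rfl
  have hle1 : ∀ x y, p x y ≤ 1 := by
    intro x y
    rw [← hrow x]
    exact Finset.single_le_sum (fun z _ => hpnn x z) (Finset.mem_univ y)
  refine ⟨p, ⟨?_, hrow, ?_⟩, ?_⟩
  · intro x y
    by_cases h : ∀ i, p' x (e (y, i)) = 0
    · left; simp [hpdef, h]
    · push_neg at h
      obtain ⟨i, hi⟩ := h
      have h1 : p' x (e (y, i)) = 1 := (hp'.1 x _).resolve_left hi
      right
      have hge : 1 ≤ p x y := by
        calc (1:ℝ) = p' x (e (y, i)) := h1.symm
          _ ≤ p x y := by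
            simp only [hpdef, Matrix.of_apply]
            exact Finset.single_le_sum (f := fun j => p' x (e (y, j)))
              (fun z _ => hnn x _) (Finset.mem_univ i)
      linarith [hle1 x y]
  · have hch : ∀ y ∈ {y : Fin n | ∃ x, p x y ≠ 0}, ∃ i, ∃ x, p' x (e (y, i)) ≠ 0 := by
      rintro y ⟨x, hx⟩
      by_contra h
      push_neg at h
      exact hx (by simp only [hpdef, Matrix.of_apply]; exact Finset.sum_eq_zero fun i _ => h i x)
    classical
    set f : Fin n → Fin (n * k) := fun y =>
      if hy : y ∈ {y : Fin n | ∃ x, p x y ≠ 0} then e (y, Classical.choose (hch y hy)) else e (y, ⟨0, hk⟩)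
    have hmaps : ∀ y ∈ {y : Fin n | ∃ x, p x y ≠ 0}, f y ∈ {y' : Fin (n * k) | ∃ x, p' x y' ≠ 0} := by
      intro y hy
      simp only [f, dif_pos hy]
      exact Classical.choose_spec (hch y hy)
    have hfst : ∀ y, (e.symm (f y)).1 = y := by
      intro y
      by_cases hy : y ∈ {y : Fin n | ∃ x, p x y ≠ 0}
      · simp only [f, dif_pos hy, Equiv.symm_apply_apply]
      · simp only [f, dif_neg hy, Equiv.symm_apply_apply]
    have hinj : Set.InjOn f {y : Fin n | ∃ x, p x y ≠ 0} := by
      intro a _ b _ hab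
      have := congrArg (fun z => (e.symm z).1) hab
      simpa [hfst] using this
    calc ({y : Fin n | ∃ x, p x y ≠ 0}).ncard
        ≤ ({y' : Fin (n * k) | ∃ x, p' x y' ≠ 0}).ncard :=
          Set.ncard_le_ncard_of_injOn f hmaps hinj (Set.toFinite _)
      _ ≤ d := hp'.2.2
  · simp only [payoff, LinearMap.coe_mk, AddHom.coe_mk]
    congr 1; ext x
    rw [← e.sum_comp (fun y' => g' x y' * p' x y'), Fintype.sum_prod_type]
    simp only [hg', hpdef, Matrix.of_apply, Finset.mul_sum]

end Main

/-- Repeating each column of the game matrix `k` times does not change the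
maximal payoff over `C`. -/
theorem game_column_repetition (m n d k : ℕ) (hm : 0 < m) (hn : 0 < n)
    (hd : 0 < d) (hk : 0 < k) (g : Matrix (Fin m) (Fin n) ℝ)
    (g' : Matrix (Fin m) (Fin (n * k)) ℝ)
    (hg' : ∀ (x : Fin m) (y : Fin n) (i : Fin k),
      g' x (finProdFinEquiv (y, i)) = g x y) :
    ∃ M : ℝ,
      IsGreatest ((fun p => ∑ x, ∑ y, g x y * p x y) '' C m n d) M ∧
      IsGreatest ((fun p => ∑ x, ∑ y', g' x y' * p x y') '' C m (n * k) d) M := by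
  obtain ⟨M, hMV, hMC⟩ := greatest_hull (m := m) (d := d) hn hd g
  obtain ⟨M', hMV', hMC'⟩ := greatest_hull (m := m) (d := d)
    (Nat.mul_pos hn hk) hd g'
  have hMM' : M = M' := by
    apply le_antisymm
    · obtain ⟨p, hp, hpM⟩ := hMV.1
      obtain ⟨p', hp', hval⟩ := forward hk g g' hg' hp
      rw [← hpM, ← hval]
      exact hMV'.2 ⟨p', hp', rfl⟩
    · obtain ⟨p', hp', hpM⟩ := hMV'.1
      obtain ⟨p, hp, hval⟩ := backward hk g g' hg' hp'
      rw [← hpM, ← hval]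
      exact hMV.2 ⟨p, hp, rfl⟩
  have e1 : (fun p => ∑ x, ∑ y, g x y * p x y) = ⇑(payoff g) := rfl
  have e2 : (fun p => ∑ x, ∑ y', g' x y' * p x y') = ⇑(payoff g') := rfl
  exact ⟨M, e1 ▸ hMC, e2 ▸ hMM' ▸ hMC'⟩
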